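/- Assume the hypotheses of the oscillation decay theorem: there exist r_1 ∈ (0, r_0), η_1 > 0 and γ ∈ (0, 1 − 2^{−η_1}) such that any function v that is bounded by 1/2 in B(z, ρ), is a viscosity subsolution of M^+_L v ≥ 0 in B(z, ρ), satisfies v(x) ≤ (2 (min(|x−z|, r_0))/ρ)^{η_1} − 1/2 outside B(z, ρ), and satisfies |{x ∈ B(z,ρ): v(x) ≤ 0}| ≥ |B(z,ρ)|/2, must satisfy v ≤ 1/2 − γ in B(z, ρ/2), for every ρ < r_1. Then any bounded u with M^+_L u ≥ 0 and M^−_L u ≤ 0 in B(z_0, r) (viscosity sense) satisfies the Hölder estimate sup_{x,y ∈ B(z_0, r/2)} |u(x) − u(y)|/|x−y|^α ≤ C (1/(r ∧ r_0))^α ‖u‖_∞ with α = −log_2(1−γ) and C = (4 r_0/r_1)^α ·(appropriate normalization constant). -/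

import Mathlib

open MeasureTheory Real Set Metric
open scoped Classical

/-- The linear integro-differential operator `L_K` with kernel `K`,
with gradient compensation on `{|y - x| < r0}` only when `δ₂ ≥ 1`. -/
noncomputable def Lop (d : ℕ) (r0 d2 : ℝ)
    (K : EuclideanSpace ℝ (Fin d) → EuclideanSpace ℝ (Fin d) → ℝ)
    (u : EuclideanSpace ℝ (Fin d) → ℝ) (x : EuclideanSpace ℝ (Fin d)) : ℝ :=
  ∫ y, (u y - u x -
      (if dist y x < r0 ∧ 1 ≤ d2 then (inner ℝ (gradient u x) (y - x) : ℝ) else 0)) * K x y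

/-- The class of kernels comparable to `J` with constants `λ, Λ`. -/
def KernelClass (d : ℕ) (lam Lam : ℝ)
    (J : EuclideanSpace ℝ (Fin d) → EuclideanSpace ℝ (Fin d) → ℝ) :
    Set (EuclideanSpace ℝ (Fin d) → EuclideanSpace ℝ (Fin d) → ℝ) :=
  {K | ∀ x y, lam * J x y ≤ K x y ∧ K x y ≤ Lam * J x y}

/-- The maximal operator `M⁺ u(x) = sup_{L ∈ 𝓛} L u(x)`. -/
noncomputable def Mplus (d : ℕ) (r0 d2 lam Lam : ℝ)
    (J : EuclideanSpace ℝ (Fin d) → EuclideanSpace ℝ (Fin d) → ℝ)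
    (u : EuclideanSpace ℝ (Fin d) → ℝ) (x : EuclideanSpace ℝ (Fin d)) : ℝ :=
  sSup {v | ∃ K ∈ KernelClass d lam Lam J, v = Lop d r0 d2 K u x}

/-- The minimal operator `M⁻ u(x) = inf_{L ∈ 𝓛} L u(x)`. -/
noncomputable def Mminus (d : ℕ) (r0 d2 lam Lam : ℝ)
    (J : EuclideanSpace ℝ (Fin d) → EuclideanSpace ℝ (Fin d) → ℝ)
    (u : EuclideanSpace ℝ (Fin d) → ℝ) (x : EuclideanSpace ℝ (Fin d)) : ℝ :=
  sInf {v | ∃ K ∈ KernelClass d lam Lam J, v = Lop d r0 d2 K u x}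

/-- `φ` is a `C²` test function touching `u` from above at `x` on the neighborhood `N`. -/
def TouchAbove {d : ℕ} (u φ : EuclideanSpace ℝ (Fin d) → ℝ)
    (N : Set (EuclideanSpace ℝ (Fin d))) (x : EuclideanSpace ℝ (Fin d)) : Prop :=
  φ x = u x ∧ ∀ y ∈ N, y ≠ x → u y < φ y

def TouchBelow {d : ℕ} (u φ : EuclideanSpace ℝ (Fin d) → ℝ)
    (N : Set (EuclideanSpace ℝ (Fin d))) (x : EuclideanSpace ℝ (Fin d)) : Prop :=
  φ x = u x ∧ ∀ y ∈ N, y ≠ x → φ y < u y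

/-- `u` is a viscosity subsolution of `Mop u ≥ 0` in the open set `D`. -/
def ViscSubsol {d : ℕ}
    (Mop : (EuclideanSpace ℝ (Fin d) → ℝ) → EuclideanSpace ℝ (Fin d) → ℝ)
    (u : EuclideanSpace ℝ (Fin d) → ℝ) (D : Set (EuclideanSpace ℝ (Fin d))) : Prop :=
  ∀ x ∈ D, ∀ N ∈ nhds x, N ⊆ D → ∀ φ : EuclideanSpace ℝ (Fin d) → ℝ,
    ContDiffOn ℝ 2 φ N → TouchAbove u φ N x → 0 ≤ Mop (N.piecewise φ u) x

/-- `u` is a viscosity supersolution of `Mop u ≤ 0` in the open set `D`. -/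
def ViscSupersol {d : ℕ}
    (Mop : (EuclideanSpace ℝ (Fin d) → ℝ) → EuclideanSpace ℝ (Fin d) → ℝ)
    (u : EuclideanSpace ℝ (Fin d) → ℝ) (D : Set (EuclideanSpace ℝ (Fin d))) : Prop :=
  ∀ x ∈ D, ∀ N ∈ nhds x, N ⊆ D → ∀ φ : EuclideanSpace ℝ (Fin d) → ℝ,
    ContDiffOn ℝ 2 φ N → TouchBelow u φ N x → Mop (N.piecewise φ u) x ≤ 0

lemma gradient_affine {F : Type*} [NormedAddCommGroup F] [InnerProductSpace ℝ F]
    [CompleteSpace F] (u : F → ℝ) (x : F) (c b : ℝ) (hc : c ≠ 0) :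
    gradient (fun y => c * u y + b) x = c • gradient u x := by
  by_cases h : DifferentiableAt ℝ u x
  · have h1 : fderiv ℝ (fun y => c * u y + b) x = c • fderiv ℝ u x := by
      rw [fderiv_add_const, fderiv_const_mul h]
    unfold gradient
    rw [h1, _root_.map_smul]
  · have h2 : ¬ DifferentiableAt ℝ (fun y => c * u y + b) x := by
      intro h2
      apply h
      have he : (fun y => c⁻¹ * ((fun y => c * u y + b) y - b)) = u := by
        funext y; field_simp; ring
      rw [← he]
      exact (h2.sub_const b).const_mul c⁻¹
    unfold gradient
    rw [fderiv_zero_of_not_differentiableAt h, fderiv_zero_of_not_differentiableAt h2,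
      map_zero, smul_zero]

lemma Lop_affine {d : ℕ} (r0 d2 : ℝ)
    (K : EuclideanSpace ℝ (Fin d) → EuclideanSpace ℝ (Fin d) → ℝ)
    (u : EuclideanSpace ℝ (Fin d) → ℝ) (x : EuclideanSpace ℝ (Fin d))
    (c b : ℝ) (hc : c ≠ 0) :
    Lop d r0 d2 K (fun y => c * u y + b) x = c * Lop d r0 d2 K u x := by
  unfold Lop
  rw [← MeasureTheory.integral_const_mul]
  congr 1
  funext y
  rw [gradient_affine u x c b hc]
  by_cases h : dist y x < r0 ∧ 1 ≤ d2
  · rw [if_pos h, if_pos h, real_inner_smul_left]; ring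
  · rw [if_neg h, if_neg h]; ring

lemma Lop_neg {d : ℕ} (r0 d2 : ℝ)
    (K : EuclideanSpace ℝ (Fin d) → EuclideanSpace ℝ (Fin d) → ℝ)
    (u : EuclideanSpace ℝ (Fin d) → ℝ) (x : EuclideanSpace ℝ (Fin d)) :
    Lop d r0 d2 K (fun y => -(u y)) x = - Lop d r0 d2 K u x := by
  have h : (fun y => -(u y)) = (fun y => (-1:ℝ) * u y + 0) := by funext y; ring
  rw [h, Lop_affine r0 d2 K u x (-1) 0 (by norm_num)]
  ring

open scoped Pointwise in
lemma Mplus_set_affine {d : ℕ} (r0 d2 lam Lam : ℝ)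
    (J : EuclideanSpace ℝ (Fin d) → EuclideanSpace ℝ (Fin d) → ℝ)
    (u : EuclideanSpace ℝ (Fin d) → ℝ) (x : EuclideanSpace ℝ (Fin d))
    (c b : ℝ) (hc : c ≠ 0) :
    {v | ∃ K ∈ KernelClass d lam Lam J, v = Lop d r0 d2 K (fun y => c * u y + b) x}
      = c • {v | ∃ K ∈ KernelClass d lam Lam J, v = Lop d r0 d2 K u x} := by
  ext v
  constructor
  · rintro ⟨K, hK, rfl⟩
    exact ⟨Lop d r0 d2 K u x, ⟨K, hK, rfl⟩, by
      rw [Lop_affine r0 d2 K u x c b hc]; rfl⟩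
  · rintro ⟨w, ⟨K, hK, rfl⟩, rfl⟩
    exact ⟨K, hK, by rw [Lop_affine r0 d2 K u x c b hc]; rfl⟩

open scoped Pointwise in
lemma Mplus_affine {d : ℕ} (r0 d2 lam Lam : ℝ)
    (J : EuclideanSpace ℝ (Fin d) → EuclideanSpace ℝ (Fin d) → ℝ)
    (u : EuclideanSpace ℝ (Fin d) → ℝ) (x : EuclideanSpace ℝ (Fin d))
    (c b : ℝ) (hc : 0 < c) :
    Mplus d r0 d2 lam Lam J (fun y => c * u y + b) x
      = c * Mplus d r0 d2 lam Lam J u x := by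
  unfold Mplus
  rw [Mplus_set_affine r0 d2 lam Lam J u x c b hc.ne',
    Real.sSup_smul_of_nonneg hc.le]
  rfl

open scoped Pointwise in
lemma Mplus_neg {d : ℕ} (r0 d2 lam Lam : ℝ)
    (J : EuclideanSpace ℝ (Fin d) → EuclideanSpace ℝ (Fin d) → ℝ)
    (u : EuclideanSpace ℝ (Fin d) → ℝ) (x : EuclideanSpace ℝ (Fin d)) :
    Mplus d r0 d2 lam Lam J (fun y => -(u y)) x
      = - Mminus d r0 d2 lam Lam J u x := by
  unfold Mplus Mminus
  have h : (fun y => -(u y)) = (fun y => (-1:ℝ) * u y + 0) := by funext y; ring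
  rw [h, Mplus_set_affine r0 d2 lam Lam J u x (-1) 0 (by norm_num),
    Real.sSup_smul_of_nonpos (by norm_num : (-1:ℝ) ≤ 0)]
  simp

lemma ViscSubsol_mono {d : ℕ}
    (Mop : (EuclideanSpace ℝ (Fin d) → ℝ) → EuclideanSpace ℝ (Fin d) → ℝ)
    (u : EuclideanSpace ℝ (Fin d) → ℝ) {D B : Set (EuclideanSpace ℝ (Fin d))}
    (h : ViscSubsol Mop u D) (hBD : B ⊆ D) : ViscSubsol Mop u B :=
  fun x hx N hN hNB => h x (hBD hx) N hN (hNB.trans hBD)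

lemma ViscSupersol_mono {d : ℕ}
    (Mop : (EuclideanSpace ℝ (Fin d) → ℝ) → EuclideanSpace ℝ (Fin d) → ℝ)
    (u : EuclideanSpace ℝ (Fin d) → ℝ) {D B : Set (EuclideanSpace ℝ (Fin d))}
    (h : ViscSupersol Mop u D) (hBD : B ⊆ D) : ViscSupersol Mop u B :=
  fun x hx N hN hNB => h x (hBD hx) N hN (hNB.trans hBD)

lemma ViscSubsol_affine {d : ℕ} (r0 d2 lam Lam : ℝ)
    (J : EuclideanSpace ℝ (Fin d) → EuclideanSpace ℝ (Fin d) → ℝ)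
    (u : EuclideanSpace ℝ (Fin d) → ℝ) {D : Set (EuclideanSpace ℝ (Fin d))}
    (c b : ℝ) (hc : 0 < c)
    (h : ViscSubsol (Mplus d r0 d2 lam Lam J) u D) :
    ViscSubsol (Mplus d r0 d2 lam Lam J) (fun y => c * u y + b) D := by
  intro x hx N hN hND φ hφ htouch
  obtain ⟨hφx, hφgt⟩ := htouch
  set ψ : EuclideanSpace ℝ (Fin d) → ℝ := fun y => (φ y - b) / c with hψdef
  have hψ : ContDiffOn ℝ 2 ψ N := (hφ.sub contDiffOn_const).div_const c
  have htouch' : TouchAbove u ψ N x := by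
    constructor
    · simp only [hψdef, hφx]
      field_simp
      ring
    · intro y hy hyx
      have := hφgt y hy hyx
      simp only [hψdef]
      rw [lt_div_iff₀ hc]
      have h2 : c * u y + b < φ y := this
      linarith
  have hpw : N.piecewise φ (fun y => c * u y + b)
      = fun y => c * (N.piecewise ψ u) y + b := by
    funext y
    by_cases hy : y ∈ N
    · simp only [Set.piecewise_eq_of_mem _ _ _ hy, hψdef]
      field_simp
      ring
    · simp only [Set.piecewise_eq_of_notMem _ _ _ hy]
  rw [hpw, Mplus_affine r0 d2 lam Lam J _ x c b hc]
  exact mul_nonneg hc.le (h x hx N hN hND ψ hψ htouch')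

lemma ViscSupersol_to_sub {d : ℕ} (r0 d2 lam Lam : ℝ)
    (J : EuclideanSpace ℝ (Fin d) → EuclideanSpace ℝ (Fin d) → ℝ)
    (u : EuclideanSpace ℝ (Fin d) → ℝ) {D : Set (EuclideanSpace ℝ (Fin d))}
    (h : ViscSupersol (Mminus d r0 d2 lam Lam J) u D) :
    ViscSubsol (Mplus d r0 d2 lam Lam J) (fun y => -(u y)) D := by
  intro x hx N hN hND φ hφ htouch
  obtain ⟨hφx, hφgt⟩ := htouch
  set ψ : EuclideanSpace ℝ (Fin d) → ℝ := fun y => -(φ y) with hψdef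
  have hψ : ContDiffOn ℝ 2 ψ N := hφ.neg
  have htouch' : TouchBelow u ψ N x := by
    constructor
    · simp only [hψdef, hφx]; ring
    · intro y hy hyx
      have := hφgt y hy hyx
      simp only [hψdef]
      have h2 : -u y < φ y := this
      linarith
  have hle := h x hx N hN hND ψ hψ htouch'
  have hpw : N.piecewise φ (fun y => -(u y))
      = fun y => -((N.piecewise ψ u) y) := by
    funext y
    by_cases hy : y ∈ N
    · simp only [Set.piecewise_eq_of_mem _ _ _ hy, hψdef, neg_neg]
    · simp only [Set.piecewise_eq_of_notMem _ _ _ hy]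
  rw [hpw, Mplus_neg r0 d2 lam Lam J _ x]
  linarith
set_option maxHeartbeats 2000000 in
theorem stmt17 (d : ℕ) (hd : 1 ≤ d) (r0 a1 a2 d1 d2 lam Lam M0 : ℝ) (f : ℝ → ℝ)
    (J : EuclideanSpace ℝ (Fin d) → EuclideanSpace ℝ (Fin d) → ℝ)
    (hr0 : 0 < r0) (ha1 : 0 < a1) (ha2 : 0 < a2)
    (hd1 : d1 ∈ Set.Ioo (0:ℝ) 2) (hd2 : d2 ∈ Set.Ioo (0:ℝ) 2)
    (hlam : 0 < lam) (hLam : lam ≤ Lam)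
    (hf0 : ∀ s, 0 ≤ s → 0 ≤ f s)
    (hmono : ∀ s t, 0 ≤ s → s ≤ t → f s ≤ f t)
    (hscale : ∀ s t, 1 ≤ s → 1/r0 ≤ t →
      a1 * s ^ d1 * f t ≤ f (s * t) ∧ f (s * t) ≤ a2 * s ^ d2 * f t)
    (hJpos : ∀ x y, x ≠ y → 0 ≤ J x y)
    (hJ : ∀ x y, 0 < dist x y → dist x y < r0 →
      J x y = f (dist x y)⁻¹ / (dist x y) ^ (d : ℝ))
    (hM0 : ∀ x, (∫ y in {y | r0 ≤ dist y x}, J x y) ≤ M0)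
    -- the oscillation decay hypothesis with constants r1, η1, γ
    (r1 η1 γ : ℝ) (hr1 : r1 ∈ Set.Ioo 0 r0) (hη1 : 0 < η1)
    (hγ : γ ∈ Set.Ioo 0 (1 - 2 ^ (-η1)))
    (Hdecay : ∀ (z : EuclideanSpace ℝ (Fin d)) (ρ : ℝ), 0 < ρ → ρ < r1 →
      ∀ v : EuclideanSpace ℝ (Fin d) → ℝ, (∃ M, ∀ x, |v x| ≤ M) →
        ViscSubsol (Mplus d r0 d2 lam Lam J) v (Metric.ball z ρ) →
        (∀ x ∈ Metric.ball z ρ, v x ≤ 1 / 2) →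
        (∀ x ∉ Metric.ball z ρ, v x ≤ (2 * min (dist x z) r0 / ρ) ^ η1 - 1 / 2) →
        volume (Metric.ball z ρ) / 2 ≤ volume {x ∈ Metric.ball z ρ | v x ≤ 0} →
        ∀ x ∈ Metric.ball z (ρ / 2), v x ≤ 1 / 2 - γ) :
    -- the Hölder estimate
    ∀ (z0 : EuclideanSpace ℝ (Fin d)) (r : ℝ), 0 < r →
      ∀ u : EuclideanSpace ℝ (Fin d) → ℝ, (∃ M, ∀ x, |u x| ≤ M) →
        ViscSubsol (Mplus d r0 d2 lam Lam J) u (Metric.ball z0 r) →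
        ViscSupersol (Mminus d r0 d2 lam Lam J) u (Metric.ball z0 r) →
        ∃ C : ℝ, 0 < C ∧ ∀ x ∈ Metric.ball z0 (r / 2), ∀ y ∈ Metric.ball z0 (r / 2),
          |u x - u y| ≤ C * (1 / min r r0) ^ (-Real.logb 2 (1 - γ)) *
            (⨆ w, |u w|) * dist x y ^ (-Real.logb 2 (1 - γ)) := by

  intro z0 r hr u hubd hsub hsup
  obtain ⟨hγ0, hγ1⟩ := hγ
  obtain ⟨hr10, hr1r0⟩ := hr1
  set α : ℝ := -Real.logb 2 (1 - γ) with hαdef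
  set θ : ℝ := 1 - γ with hθdef
  clear_value α θ
  have h2β : (0:ℝ) < 2 ^ (-η1) := Real.rpow_pos_of_pos two_pos _
  have hθlb : (2:ℝ) ^ (-η1) < θ := by rw [hθdef]; linarith
  have hθ0 : 0 < θ := lt_trans h2β hθlb
  have hθ1 : θ < 1 := by rw [hθdef]; linarith
  have hα0 : 0 < α := by
    rw [hαdef]
    have := Real.logb_neg (by norm_num : (1:ℝ) < 2) hθ0 hθ1
    linarith
  have hθα : θ = 2 ^ (-α) := by
    rw [hαdef, neg_neg]
    exact (Real.rpow_logb two_pos (by norm_num) hθ0).symm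
  obtain ⟨M, hM⟩ := hubd
  have hbdd : BddAbove (Set.range fun w => |u w|) := ⟨M, by rintro _ ⟨w, rfl⟩; exact hM w⟩
  set S : ℝ := ⨆ w, |u w| with hSdef
  have hS : ∀ x, |u x| ≤ S := fun x => le_ciSup hbdd x
  have hS0 : 0 ≤ S := le_trans (abs_nonneg _) (hS 0)
  rcases eq_or_lt_of_le hS0 with hS0' | hSpos
  · refine ⟨1, one_pos, ?_⟩
    intro x _ y _
    have hux : u x = 0 := abs_eq_zero.mp (le_antisymm (hS0' ▸ hS x) (abs_nonneg _))
    have huy : u y = 0 := abs_eq_zero.mp (le_antisymm (hS0' ▸ hS y) (abs_nonneg _))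
    rw [hux, huy, sub_zero, abs_zero, ← hS0']
    simp
  · set mn : ℝ := min r r0 with hmndef
    clear_value mn
    have hmn : 0 < mn := by rw [hmndef]; exact lt_min hr hr0
    set ρ0 : ℝ := min r r1 / 2 with hρ0def
    clear_value ρ0
    have hρ0 : 0 < ρ0 := by rw [hρ0def]; positivity
    have hρ0r1 : ρ0 < r1 := by
      rw [hρ0def]
      have := min_le_right r r1
      linarith
    have hρ0r : 2 * ρ0 ≤ r := by
      rw [hρ0def]
      have := min_le_left r r1
      linarith
    have hρ0r0 : ρ0 ≤ r0 := by linarith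
    have hβpos : (0:ℝ) < 2 ^ η1 := Real.rpow_pos_of_pos two_pos _
    have hβ1 : (1:ℝ) < 2 ^ η1 :=
      (Real.one_lt_rpow_iff_of_pos two_pos).mpr (Or.inl ⟨one_lt_two, hη1⟩)
    have hββ : (2:ℝ) ^ (-η1) * 2 ^ η1 = 1 := by
      rw [← Real.rpow_add two_pos]; simp
    have hθβ : 1 ≤ θ * 2 ^ η1 := by nlinarith [mul_lt_mul_of_pos_right hθlb hβpos]
    have key : ∀ z : EuclideanSpace ℝ (Fin d), z ∈ ball z0 (r/2) → ∀ k : ℕ,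
        ∃ a b2 : ℝ, b2 - a = 2*S*θ^k ∧
          (∀ x ∈ ball z (ρ0/2^k), a ≤ u x ∧ u x ≤ b2) ∧
          (∀ x, x ∉ ball z (ρ0/2^k) →
            |u x - (a+b2)/2| ≤ 2*S*θ^k * ((2 * min (dist x z) r0 / (ρ0/2^k)) ^ η1 - 1/2)) := by
      intro z hz k
      induction k with
      | zero =>
        refine ⟨-S, S, by rw [pow_zero]; ring, fun x _ => abs_le.mp (hS x), ?_⟩
        intro x hx
        rw [pow_zero] at *
        have hd1 : ρ0/1 ≤ dist x z := not_lt.mp (by simpa [mem_ball] using hx)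
        have hm : ρ0 ≤ min (dist x z) r0 := le_min (by linarith) hρ0r0
        have hT : (1:ℝ) ≤ (2 * min (dist x z) r0 / (ρ0/1)) ^ η1 := by
          have hbase : (1:ℝ) ≤ 2 * min (dist x z) r0 / (ρ0/1) := by
            rw [div_one, le_div_iff₀ hρ0]; linarith
          calc (1:ℝ) = 1 ^ η1 := (Real.one_rpow _).symm
            _ ≤ _ := Real.rpow_le_rpow zero_le_one hbase hη1.le
        have hux : |u x - (-S + S)/2| ≤ S := by
          have : (-S + S)/2 = 0 := by ring
          rw [this, sub_zero]; exact hS x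
        nlinarith [hux, hS0, hT]
      | succ k ih =>
        obtain ⟨a, b2, hab, hi, hiii⟩ := ih
        set ρ : ℝ := ρ0/2^k with hρdef
        clear_value ρ
        have hρpos : 0 < ρ := by rw [hρdef]; positivity
        have hρle : ρ ≤ ρ0 := by
          rw [hρdef]
          exact div_le_self hρ0.le (one_le_pow₀ one_le_two)
        have hρr1 : ρ < r1 := lt_of_le_of_lt hρle hρ0r1
        have hρr0 : ρ ≤ r0 := hρle.trans hρ0r0
        have hsucc : ρ0/2^(k+1) = ρ/2 := by rw [hρdef, pow_succ]; ring
        set w : ℝ := 2*S*θ^k with hwdef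
        clear_value w
        have hwpos : 0 < w := by rw [hwdef]; positivity
        set mid : ℝ := (a+b2)/2 with hmiddef
        clear_value mid
        have hball : ball z ρ ⊆ ball z0 r := by
          intro p hp
          rw [mem_ball] at hp ⊢
          have hz' : dist z z0 < r/2 := mem_ball.mp hz
          calc dist p z0 ≤ dist p z + dist z z0 := dist_triangle _ _ _
            _ < ρ + r/2 := by linarith
            _ ≤ r := by linarith
        have hcover : volume (ball z ρ) ≤ volume {x ∈ ball z ρ | u x ≤ mid}
            + volume {x ∈ ball z ρ | mid ≤ u x} := by
          refine le_trans (measure_mono ?_) (measure_union_le _ _)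
          intro p hp
          rcases le_total (u p) mid with h | h
          · exact Or.inl ⟨hp, h⟩
          · exact Or.inr ⟨hp, h⟩
        have hhalf : volume (ball z ρ)/2 ≤ volume {x ∈ ball z ρ | u x ≤ mid}
            ∨ volume (ball z ρ)/2 ≤ volume {x ∈ ball z ρ | mid ≤ u x} := by
          by_contra hcon
          push_neg at hcon
          obtain ⟨h1, h2⟩ := hcon
          have h3 := ENNReal.add_lt_add h1 h2
          rw [ENNReal.add_halves] at h3
          exact absurd hcover (not_le.mpr h3)
        have hθpow : 2*S*θ^(k+1) = θ * w := by rw [hwdef, pow_succ]; ring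
        have hextgen : ∀ mid' : ℝ, |mid' - mid| ≤ γ*w/2 →
            ∀ x, x ∉ ball z (ρ/2) →
            |u x - mid'| ≤ 2*S*θ^(k+1) * ((2 * min (dist x z) r0 / (ρ/2)) ^ η1 - 1/2) := by
          intro mid' hmid' x hx
          have hdx : ρ/2 ≤ dist x z := not_lt.mp (by simpa [mem_ball] using hx)
          set m : ℝ := min (dist x z) r0 with hmdef
          clear_value m
          have hm0 : 0 < m := by
            rw [hmdef]; exact lt_min (lt_of_lt_of_le (half_pos hρpos) hdx) hr0
          have hmhalf : ρ/2 ≤ m := by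
            rw [hmdef]; exact le_min hdx (by linarith)
          rw [hθpow]
          by_cases hin : x ∈ ball z ρ
          · have hu := hi x hin
            have h1 : |u x - mid| ≤ w/2 := by
              rw [hmiddef, abs_le]
              constructor <;> [linarith [hu.1, hab]; linarith [hu.2, hab]]
            have hTnew1 : (1:ℝ) ≤ θ * (2 * m / (ρ/2)) ^ η1 := by
              have hbase : (2:ℝ) ≤ 2*m/(ρ/2) := by
                rw [le_div_iff₀ (half_pos hρpos)]; linarith
              have h5 : (2:ℝ)^η1 ≤ (2*m/(ρ/2))^η1 :=
                Real.rpow_le_rpow (by norm_num) hbase hη1.le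
              have h6 : θ * 2^η1 ≤ θ * (2*m/(ρ/2))^η1 := mul_le_mul_of_nonneg_left h5 hθ0.le
              linarith
            have htri : |u x - mid'| ≤ w/2 + γ*w/2 := by
              calc |u x - mid'| ≤ |u x - mid| + |mid - mid'| := abs_sub_le _ _ _
                _ = |u x - mid| + |mid' - mid| := by rw [abs_sub_comm mid mid']
                _ ≤ w/2 + γ*w/2 := by linarith
            set X : ℝ := (2 * m / (ρ/2)) ^ η1 with hXdef
            rw [hθdef]
            rw [hθdef] at hTnew1
            have h9 : 0 ≤ w * ((1-γ)*X - 1) := mul_nonneg hwpos.le (by linarith)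
            linarith only [h9, htri]
          · have hfar := hiii x hin
            rw [← hmdef] at hfar
            set T : ℝ := (2 * m / ρ) ^ η1 with hTdef
            have hTnew_eq : (2 * m / (ρ/2)) ^ η1 = 2 ^ η1 * T := by
              rw [hTdef, ← Real.mul_rpow (by norm_num) (by positivity)]
              congr 1
              field_simp
            have hT0 : 0 ≤ T := Real.rpow_nonneg (by positivity) _
            have hTβ : (2:ℝ)^η1 ≤ T := by
              have hd2 : ρ ≤ dist x z := not_lt.mp (by simpa [mem_ball] using hin)
              have hmge : ρ ≤ m := by rw [hmdef]; exact le_min hd2 hρr0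
              have hbase : (2:ℝ) ≤ 2*m/ρ := by rw [le_div_iff₀ hρpos]; linarith
              exact Real.rpow_le_rpow (by norm_num) hbase hη1.le
            have htri : |u x - mid'| ≤ w*(T - 1/2) + γ*w/2 := by
              calc |u x - mid'| ≤ |u x - mid| + |mid - mid'| := abs_sub_le _ _ _
                _ = |u x - mid| + |mid' - mid| := by rw [abs_sub_comm mid mid']
                _ ≤ w*(T - 1/2) + γ*w/2 := by linarith [hfar]
            rw [hTnew_eq, hθdef]
            have hθβ' : 1 ≤ (1-γ) * 2^η1 := by rw [hθdef] at hθβ; exact hθβ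
            have hkey : 0 ≤ (w * T) * ((1-γ) * 2^η1 - 1) :=
              mul_nonneg (mul_nonneg hwpos.le hT0) (by linarith only [hθβ'])
            linarith only [hkey, htri]
        rw [hsucc]
        rcases hhalf with hmaj | hmaj
        · set v : EuclideanSpace ℝ (Fin d) → ℝ := fun y => (u y - mid)/w with hvdef
          have hveq : v = fun y => (1/w) * u y + (-mid/w) := by
            funext p
            rw [hvdef]
            field_simp
            ring
          have hvsub : ViscSubsol (Mplus d r0 d2 lam Lam J) v (ball z ρ) := by
            rw [hveq]
            exact ViscSubsol_affine r0 d2 lam Lam J u (1/w) (-mid/w) (by positivity)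
              (ViscSubsol_mono _ _ hsub hball)
          have hvbd : ∃ Mv, ∀ p, |v p| ≤ Mv := by
            refine ⟨(M + |mid|)/w, fun p => ?_⟩
            rw [hvdef, abs_div, abs_of_pos hwpos]
            gcongr
            exact (abs_sub _ _).trans (by linarith [hM p])
          have hvhalf : ∀ p ∈ ball z ρ, v p ≤ 1/2 := by
            intro p hp
            rw [hvdef, div_le_iff₀ hwpos]
            have := (hi p hp).2
            linarith [hab]
          have hvout : ∀ p ∉ ball z ρ, v p ≤ (2 * min (dist p z) r0 / ρ)^η1 - 1/2 := by
            intro p hp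
            have h6 := hiii p hp
            rw [hvdef, div_le_iff₀ hwpos]
            calc u p - mid ≤ |u p - mid| := le_abs_self _
              _ ≤ w * ((2 * min (dist p z) r0 / ρ)^η1 - 1/2) := h6
              _ = ((2 * min (dist p z) r0 / ρ)^η1 - 1/2) * w := mul_comm _ _
          have hvmeas : volume (ball z ρ)/2 ≤ volume {p ∈ ball z ρ | v p ≤ 0} := by
            refine le_trans hmaj (measure_mono ?_)
            rintro p ⟨hp, hple⟩
            exact ⟨hp, by rw [hvdef]; exact div_nonpos_of_nonpos_of_nonneg (by linarith) hwpos.le⟩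
          have hdec := Hdecay z ρ hρpos hρr1 v hvbd hvsub hvhalf hvout hvmeas
          have hwth : 2*S*θ^(k+1) = w*θ := by rw [hwdef, pow_succ]; ring
          refine ⟨a, b2 - γ*w, ?_, ?_, ?_⟩
          · rw [hwth, hθdef]
            have hb : b2 = a + w := by linarith [hab]
            rw [hb]; ring
          · intro p hp
            have hp' : p ∈ ball z ρ := ball_subset_ball (by linarith) hp
            refine ⟨(hi p hp').1, ?_⟩
            have h7 := hdec p hp
            rw [hvdef, div_le_iff₀ hwpos] at h7
            rw [hmiddef] at h7
            linarith only [hab, h7]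
          · have hmid' : |(a + (b2 - γ*w))/2 - mid| ≤ γ*w/2 := by
              have he : (a + (b2 - γ*w))/2 - mid = -(γ*w/2) := by rw [hmiddef]; ring
              rw [he, abs_neg, abs_of_nonneg (by positivity)]
            exact hextgen _ hmid'
        · set v : EuclideanSpace ℝ (Fin d) → ℝ := fun y => (mid - u y)/w with hvdef
          have hveq : v = fun y => (1/w) * ((fun q => -(u q)) y) + mid/w := by
            funext p
            rw [hvdef]
            field_simp
            ring
          have hvsub : ViscSubsol (Mplus d r0 d2 lam Lam J) v (ball z ρ) := by
            rw [hveq]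
            exact ViscSubsol_affine r0 d2 lam Lam J _ (1/w) (mid/w) (by positivity)
              (ViscSupersol_to_sub r0 d2 lam Lam J u (ViscSupersol_mono _ _ hsup hball))
          have hvbd : ∃ Mv, ∀ p, |v p| ≤ Mv := by
            refine ⟨(|mid| + M)/w, fun p => ?_⟩
            rw [hvdef, abs_div, abs_of_pos hwpos]
            gcongr
            exact (abs_sub _ _).trans (by linarith [hM p])
          have hvhalf : ∀ p ∈ ball z ρ, v p ≤ 1/2 := by
            intro p hp
            rw [hvdef, div_le_iff₀ hwpos]
            have := (hi p hp).1
            rw [hmiddef]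
            linarith [hab]
          have hvout : ∀ p ∉ ball z ρ, v p ≤ (2 * min (dist p z) r0 / ρ)^η1 - 1/2 := by
            intro p hp
            have h6 := hiii p hp
            rw [hvdef, div_le_iff₀ hwpos]
            calc mid - u p ≤ |u p - mid| := by rw [abs_sub_comm]; exact le_abs_self _
              _ ≤ w * ((2 * min (dist p z) r0 / ρ)^η1 - 1/2) := h6
              _ = ((2 * min (dist p z) r0 / ρ)^η1 - 1/2) * w := mul_comm _ _
          have hvmeas : volume (ball z ρ)/2 ≤ volume {p ∈ ball z ρ | v p ≤ 0} := by
            refine le_trans hmaj (measure_mono ?_)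
            rintro p ⟨hp, hple⟩
            exact ⟨hp, by rw [hvdef]; exact div_nonpos_of_nonpos_of_nonneg (by linarith) hwpos.le⟩
          have hdec := Hdecay z ρ hρpos hρr1 v hvbd hvsub hvhalf hvout hvmeas
          have hwth : 2*S*θ^(k+1) = w*θ := by rw [hwdef, pow_succ]; ring
          refine ⟨a + γ*w, b2, ?_, ?_, ?_⟩
          · rw [hwth, hθdef]
            have hb : b2 = a + w := by linarith [hab]
            rw [hb]; ring
          · intro p hp
            have hp' : p ∈ ball z ρ := ball_subset_ball (by linarith) hp
            refine ⟨?_, (hi p hp').2⟩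
            have h7 := hdec p hp
            rw [hvdef, div_le_iff₀ hwpos] at h7
            rw [hmiddef] at h7
            linarith [hab]
          · have hmid' : |(a + γ*w + b2)/2 - mid| ≤ γ*w/2 := by
              have he : (a + γ*w + b2)/2 - mid = γ*w/2 := by rw [hmiddef]; ring
              rw [he, abs_of_nonneg (by positivity)]
            exact hextgen _ hmid'
    refine ⟨2 * (4*mn/ρ0)^α, by positivity, ?_⟩
    intro x hx y hy
    rcases eq_or_ne x y with rfl | hxy
    · simp [dist_self, Real.zero_rpow hα0.ne']
    · have hD : 0 < dist x y := dist_pos.mpr hxy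
      set D : ℝ := dist x y with hDdef
      clear_value D
      have hchain : |u x - u y| ≤ 2*S*(4*D/ρ0)^α := by
        rcases le_or_gt (ρ0/2) D with hbig | hsmall
        · have hbase : (1:ℝ) ≤ 4*D/ρ0 := by rw [le_div_iff₀ hρ0]; linarith
          have h1 : (1:ℝ) ≤ (4*D/ρ0)^α := by
            calc (1:ℝ) = 1^α := (Real.one_rpow α).symm
              _ ≤ _ := Real.rpow_le_rpow zero_le_one hbase hα0.le
          have h2 : |u x - u y| ≤ 2*S := by
            calc |u x - u y| ≤ |u x| + |u y| := abs_sub _ _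
              _ ≤ 2*S := by linarith only [hS x, hS y]
          nlinarith only [h1, h2, hS0]
        · have hex : ∃ n : ℕ, ρ0/D < 2^n := pow_unbounded_of_one_lt _ one_lt_two
          have hn : ρ0/D < 2^(Nat.find hex) := Nat.find_spec hex
          have hn2 : 2 ≤ Nat.find hex := by
            by_contra hcon
            push_neg at hcon
            have hle : (2:ℝ)^(Nat.find hex) ≤ 2^1 :=
              pow_le_pow_right₀ one_le_two (by omega)
            have hgt : (2:ℝ) < ρ0/D := by rw [lt_div_iff₀ hD]; linarith
            norm_num at hle
            linarith only [hn, hle, hgt]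
          set n := Nat.find hex with hndef
          set k := n - 2 with hkdef
          have hk1 : n - 1 = k + 1 := by omega
          have hk2 : n = k + 2 := by omega
          have hmin : ¬ (ρ0/D < 2^(n-1)) := Nat.find_min hex (by omega)
          push_neg at hmin
          rw [hk1] at hmin
          rw [hk2] at hn
          have hDlt : D < ρ0/2^k := by
            rw [lt_div_iff₀ (by positivity : (0:ℝ) < 2^k)]
            have h3 : (2:ℝ)^(k+1) * D ≤ ρ0 := (le_div_iff₀ hD).mp hmin
            rw [pow_succ] at h3
            nlinarith only [h3, hD, pow_pos (zero_lt_two (α := ℝ)) k]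
          have hDge : ρ0 < 4*D*2^k := by
            have h3 : ρ0 < 2^(k+2) * D := (div_lt_iff₀ hD).mp hn
            rw [pow_succ, pow_succ] at h3
            nlinarith only [h3]
          obtain ⟨a, b2, hab, hi, _⟩ := key y hy k
          have hxmem : x ∈ ball y (ρ0/2^k) := by
            rw [mem_ball, ← hDdef]
            exact hDlt
          have hymem : y ∈ ball y (ρ0/2^k) := mem_ball_self (by positivity)
          have h4 : |u x - u y| ≤ 2*S*θ^k := by
            obtain ⟨h5, h6⟩ := hi x hxmem
            obtain ⟨h7, h8⟩ := hi y hymem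
            rw [abs_le]
            constructor <;> [linarith only [hab, h5, h8]; linarith only [hab, h6, h7]]
          have hpow : θ^k ≤ (4*D/ρ0)^α := by
            have h9 : θ^k = ((2:ℝ)^(-(k:ℝ))) ^ α := by
              rw [hθα, ← Real.rpow_natCast ((2:ℝ) ^ (-α)) k,
                ← Real.rpow_mul (by norm_num : (0:ℝ) ≤ 2),
                ← Real.rpow_mul (by norm_num : (0:ℝ) ≤ 2)]
              ring_nf
            have h10 : (2:ℝ)^(-(k:ℝ)) = ((2:ℝ)^(k:ℕ))⁻¹ := by
              rw [Real.rpow_neg (by norm_num), Real.rpow_natCast]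
            have h11 : ((2:ℝ)^(k:ℕ))⁻¹ ≤ 4*D/ρ0 := by
              rw [le_div_iff₀ hρ0, inv_mul_eq_div, div_le_iff₀ (by positivity : (0:ℝ) < 2^k)]
              nlinarith only [hDge]
            rw [h9, h10]
            exact Real.rpow_le_rpow (by positivity) h11 hα0.le
          calc |u x - u y| ≤ 2*S*θ^k := h4
            _ ≤ 2*S*(4*D/ρ0)^α := by
              have := mul_le_mul_of_nonneg_left hpow (by positivity : (0:ℝ) ≤ 2*S)
              linarith only [this]
      have hfinal : 2*S*(4*D/ρ0)^α = 2 * (4*mn/ρ0)^α * (1/mn)^α * S * D^α := by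
        have hb : (4*D/ρ0 : ℝ) = (4*mn/ρ0) * (1/mn) * D := by
          field_simp
        rw [hb, Real.mul_rpow (by positivity) hD.le,
          Real.mul_rpow (by positivity) (by positivity)]
        ring
      rw [← hfinal]
      exact hchain
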